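/- Let K ≥ 2 and 1 ≤ N_r ≤ N ≤ K be integers. Let X_1, …, X_{N_r} be independent random variables on a probability space, each uniformly distributed on a set of K arms (e.g. Fin K), and let S be a fixed set of arms with |S| = N − N_r (the arms occupied by sequentially-hopping players). Then the probability of the event {X_1 ∉ S and X_j ≠ X_1 for all j = 2, …, N_r} is at least (1 − 1/K)^(N−1) / K, which is at least 1/(4K). -/

import Mathlib

open MeasureTheory ProbabilityTheory
open scoped ENNReal

lemma aux_quarter (K : ℕ) (hK : 2 ≤ K) : (1/4 : ℝ) ≤ (1 - 1/(K:ℝ)) ^ (K - 1) := by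
  set m : ℕ := K - 1 with hm
  have hm1 : 1 ≤ m := by omega
  have hmpos : (0:ℝ) < m := by exact_mod_cast hm1
  have hKm : (K : ℝ) = (m : ℝ) + 1 := by
    have : K = m + 1 := by omega
    rw [this]; push_cast; ring
  have hq : (1 - 1/(K:ℝ)) = (1 + 1/(m:ℝ))⁻¹ := by
    rw [hKm]; field_simp; ring
  have hexp : (1 + 1/(m:ℝ)) ^ m ≤ 4 := by
    have h1 : (1 + 1/(m:ℝ)) ^ m ≤ Real.exp (1/(m:ℝ)) ^ m := by
      apply pow_le_pow_left₀ (by positivity)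
      have := Real.add_one_le_exp (1/(m:ℝ)); linarith
    have h2 : Real.exp (1/(m:ℝ)) ^ m = Real.exp 1 := by
      rw [← Real.exp_nat_mul]
      congr 1
      field_simp
    have h3 : Real.exp 1 ≤ 4 := by
      have := Real.exp_one_lt_d9; norm_num at this ⊢; linarith
    calc (1 + 1/(m:ℝ)) ^ m ≤ Real.exp (1/(m:ℝ)) ^ m := h1
      _ = Real.exp 1 := h2
      _ ≤ 4 := h3
  rw [hq, inv_pow, show (1/4 : ℝ) = 4⁻¹ by norm_num]
  exact inv_anti₀ (by positivity) hexp

/-- One round of the random-hopping sub-phase: `N_r` players choose arms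
independently and uniformly at random from `K` arms while the other
`N − N_r` players occupy a fixed set `S` with `|S| = N − N_r`; the
probability that player `0` is collision free (her arm is not in `S` and no
other random player picks it) is at least `(1 − 1/K)^(N−1)/K ≥ 1/(4K)`. -/
theorem stmt_1 {Ω : Type*} [MeasurableSpace Ω] (μ : Measure Ω)
    [IsProbabilityMeasure μ]
    (K N Nr : ℕ) (hK : 2 ≤ K) (hNr : 1 ≤ Nr) (hNrN : Nr ≤ N) (hNK : N ≤ K)
    (X : Fin Nr → Ω → Fin K) (hmeas : ∀ i, Measurable (X i))
    (hindep : iIndepFun X μ)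
    (hunif : ∀ i a, μ {ω | X i ω = a} = 1 / K)
    (S : Finset (Fin K)) (hS : S.card = N - Nr) :
    μ {ω | X ⟨0, hNr⟩ ω ∉ S ∧ ∀ j, j ≠ ⟨0, hNr⟩ → X j ω ≠ X ⟨0, hNr⟩ ω} ≥
      ENNReal.ofReal ((1 - 1 / (K : ℝ)) ^ (N - 1) / (K : ℝ)) ∧
    ENNReal.ofReal ((1 - 1 / (K : ℝ)) ^ (N - 1) / (K : ℝ)) ≥
      ENNReal.ofReal (1 / (4 * (K : ℝ))) := by
  have hKpos : (0:ℝ) < K := by positivity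
  have hKR : (1:ℝ)/K ≤ 1 := by
    rw [div_le_one hKpos]; exact_mod_cast by omega
  have hq0 : (0:ℝ) ≤ 1 - 1/(K:ℝ) := by linarith
  have hq1 : (1 - 1/(K:ℝ)) ≤ 1 := by
    have : (0:ℝ) ≤ 1/(K:ℝ) := by positivity
    linarith
  set z : Fin Nr := ⟨0, hNr⟩ with hz
  set sa : Fin K → Fin Nr → Set Ω :=
    fun a i => if i = z then X i ⁻¹' {a} else X i ⁻¹' {a}ᶜ with hsa
  -- measure of each intersection
  have hEa : ∀ a : Fin K, μ (⋂ i, sa a i) = (1/(K:ℝ≥0∞)) * (1 - 1/(K:ℝ≥0∞)) ^ (Nr - 1) := by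
    intro a
    have hprod : μ (⋂ i, sa a i) = ∏ i, μ (sa a i) := by
      apply hindep.meas_iInter
      intro i
      by_cases h : i = z
      · exact ⟨{a}, trivial, by simp [hsa, h]⟩
      · exact ⟨{a}ᶜ, trivial, by simp [hsa, h]⟩
    rw [hprod, ← Finset.mul_prod_erase Finset.univ _ (Finset.mem_univ z)]
    have h1 : μ (sa a z) = 1/(K:ℝ≥0∞) := by
      simp only [hsa, if_pos rfl]
      exact hunif z a
    have h2 : ∀ i ∈ Finset.univ.erase z, μ (sa a i) = 1 - 1/(K:ℝ≥0∞) := by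
      intro i hi
      have hiz : i ≠ z := Finset.ne_of_mem_erase hi
      simp only [hsa, if_neg hiz]
      rw [Set.preimage_compl, prob_compl_eq_one_sub (by
        exact (hmeas i) (by trivial))]
      congr 1
      exact hunif i a
    rw [h1, Finset.prod_congr rfl h2, Finset.prod_const, Finset.card_erase_of_mem (Finset.mem_univ z)]
    simp
  -- the event as a disjoint union
  have hset : {ω | X z ω ∉ S ∧ ∀ j, j ≠ z → X j ω ≠ X z ω}
      = ⋃ a ∈ (Sᶜ : Finset (Fin K)), ⋂ i, sa a i := by
    ext ω
    simp only [Set.mem_setOf_eq, Set.mem_iUnion, Set.mem_iInter, Finset.mem_compl]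
    constructor
    · rintro ⟨h1, h2⟩
      refine ⟨X z ω, h1, fun i => ?_⟩
      by_cases h : i = z
      · subst h; simp [hsa]
      · simp [hsa, h]; exact h2 i h
    · rintro ⟨a, ha, h⟩
      have hza : X z ω = a := by have := h z; simpa [hsa] using this
      refine ⟨hza ▸ ha, fun j hj => ?_⟩
      have := h j; simp [hsa, hj] at this
      rw [hza]; exact this
  have hmeasA : ∀ a : Fin K, MeasurableSet (⋂ i, sa a i) := by
    intro a
    apply MeasurableSet.iInter
    intro i
    show MeasurableSet (if i = z then X i ⁻¹' {a} else X i ⁻¹' {a}ᶜ)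
    split
    · exact (hmeas i) trivial
    · exact (hmeas i) trivial
  have hdisj : (↑(Sᶜ : Finset (Fin K)) : Set (Fin K)).PairwiseDisjoint
      (fun a => ⋂ i, sa a i) := by
    intro a _ b _ hab
    refine Set.disjoint_left.2 fun ω hωa hωb => hab ?_
    have ha := Set.mem_iInter.1 hωa z
    have hb := Set.mem_iInter.1 hωb z
    simp only [hsa, if_pos rfl, Set.mem_preimage, Set.mem_singleton_iff] at ha hb
    rw [← ha, ← hb]
  have hcard : (Sᶜ : Finset (Fin K)).card = K - (N - Nr) := by
    rw [Finset.card_compl, hS, Fintype.card_fin]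
  set c : ℕ := K - (N - Nr) with hc
  have hc1 : 1 ≤ c := by omega
  have hμE : μ {ω | X z ω ∉ S ∧ ∀ j, j ≠ z → X j ω ≠ X z ω}
      = (c : ℝ≥0∞) * ((1/(K:ℝ≥0∞)) * (1 - 1/(K:ℝ≥0∞)) ^ (Nr - 1)) := by
    rw [hset, measure_biUnion_finset hdisj (fun a _ => hmeasA a)]
    rw [Finset.sum_congr rfl (fun a _ => hEa a), Finset.sum_const, hcard, nsmul_eq_mul]
  -- convert everything to ofReal
  have hofK : (1/(K:ℝ≥0∞)) = ENNReal.ofReal (1/(K:ℝ)) := by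
    rw [ENNReal.ofReal_div_of_pos hKpos, ENNReal.ofReal_one, ENNReal.ofReal_natCast]
  have hof1 : (1 - 1/(K:ℝ≥0∞)) = ENNReal.ofReal (1 - 1/(K:ℝ)) := by
    rw [ENNReal.ofReal_sub _ (by positivity), ENNReal.ofReal_one, hofK]
  have hμE' : μ {ω | X z ω ∉ S ∧ ∀ j, j ≠ z → X j ω ≠ X z ω}
      = ENNReal.ofReal ((c:ℝ) * ((1/(K:ℝ)) * (1 - 1/(K:ℝ)) ^ (Nr - 1))) := by
    rw [hμE, hof1, hofK, ENNReal.ofReal_mul (by positivity), ENNReal.ofReal_mul (by positivity),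
      ENNReal.ofReal_pow hq0, ENNReal.ofReal_natCast]
  constructor
  · rw [ge_iff_le, hμE']
    apply ENNReal.ofReal_le_ofReal
    have hcR : (1:ℝ) ≤ c := by exact_mod_cast hc1
    have hpow : (1 - 1/(K:ℝ)) ^ (N - 1) ≤ (1 - 1/(K:ℝ)) ^ (Nr - 1) :=
      pow_le_pow_of_le_one hq0 hq1 (by omega)
    have hpow0 : (0:ℝ) ≤ (1 - 1/(K:ℝ)) ^ (Nr - 1) := by positivity
    calc (1 - 1/(K:ℝ)) ^ (N - 1) / K ≤ (1 - 1/(K:ℝ)) ^ (Nr - 1) / K := by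
          gcongr
      _ ≤ (c:ℝ) * ((1/(K:ℝ)) * (1 - 1/(K:ℝ)) ^ (Nr - 1)) := by
          rw [div_eq_mul_inv, mul_comm]
          have : (1/(K:ℝ)) * (1 - 1/(K:ℝ)) ^ (Nr - 1) = (K:ℝ)⁻¹ * (1 - 1/(K:ℝ)) ^ (Nr-1) := by
            rw [one_div]
          rw [this]
          nlinarith [mul_nonneg (le_of_lt (inv_pos.2 hKpos)) hpow0]
  · rw [ge_iff_le]
    apply ENNReal.ofReal_le_ofReal
    have h4 : (1/4:ℝ) ≤ (1 - 1/(K:ℝ)) ^ (K - 1) := aux_quarter K hK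
    have hNleK : (1 - 1/(K:ℝ)) ^ (K - 1) ≤ (1 - 1/(K:ℝ)) ^ (N - 1) :=
      pow_le_pow_of_le_one hq0 hq1 (by omega)
    rw [div_le_div_iff₀ (by positivity) hKpos]
    nlinarith
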